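/- Given δ > 0 there exists ε > 0 such that: for every n and all digraph subalgebras (A₁, C₁) and (A₂, C₂) of (M_n(ℂ), D_n), if A₁ ⊆_ε A₂, then N_{C₁}(A₁) ⊆_δ N_{C₂}(A₂); that is, for every v ∈ N_{C₁}(A₁) there exists w ∈ N_{C₂}(A₂) with ‖v − w‖ < δ. -/

import Mathlib

open scoped Matrix.Norms.L2Operator
open Matrix

/-- A digraph subalgebra of `(Mₙ(ℂ), Dₙ)`: a matrix unit system
`{v_{kl} : (k,l) ∈ S} ⊆ Mₙ(ℂ)` indexed by a reflexive transitive relation `S`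
on `{1,…,m}`, each `v_{kl}` a `Dₙ`-normalising partial isometry, with the usual
matrix unit relations, whose diagonal units are mutually orthogonal projections
in the diagonal masa `Dₙ`. -/
structure DigraphSubalgebra (n m : ℕ) where
  /-- the underlying reflexive transitive relation (digraph) on `{1,…,m}` -/
  S : Fin m → Fin m → Prop
  refl : ∀ k, S k k
  trans : ∀ k l j, S k l → S l j → S k j
  /-- the matrix units `v_{kl}` (only those with `(k,l) ∈ S` are relevant) -/
  u : Fin m → Fin m → Matrix (Fin n) (Fin n) ℂ
  partial_isometry : ∀ k l, S k l →
    ((u k l)ᴴ * u k l) * ((u k l)ᴴ * u k l) = (u k l)ᴴ * u k l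
  normalises_left : ∀ k l, S k l → ∀ c : Matrix (Fin n) (Fin n) ℂ, c.IsDiag →
    (u k l * c * (u k l)ᴴ).IsDiag
  normalises_right : ∀ k l, S k l → ∀ c : Matrix (Fin n) (Fin n) ℂ, c.IsDiag →
    ((u k l)ᴴ * c * u k l).IsDiag
  star_eq : ∀ k l, S k l → S l k → (u k l)ᴴ = u l k
  conj_left : ∀ k l, S k l → (u k l)ᴴ * u k l = u l l
  conj_right : ∀ k l, S k l → u k l * (u k l)ᴴ = u k k
  mul_eq : ∀ k l l'', S k l → S l l'' → u k l * u l l'' = u k l''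
  mul_eq_zero : ∀ k l l' l'', S k l → S l' l'' → l ≠ l' → u k l * u l' l'' = 0
  diag_isDiag : ∀ k, (u k k).IsDiag
  diag_proj : ∀ k, u k k * u k k = u k k ∧ (u k k)ᴴ = u k k
  diag_ortho : ∀ k l, k ≠ l → u k k * u l l = 0

namespace DigraphSubalgebra

variable {n m : ℕ}

/-- The digraph algebra `A' = span{v_{kl} : (k,l) ∈ S}`. -/
def A (D : DigraphSubalgebra n m) : Set (Matrix (Fin n) (Fin n) ℂ) :=
  (Submodule.span ℂ {x | ∃ k l, D.S k l ∧ x = D.u k l} : Submodule ℂ _)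

/-- The masa `C' = span{v_{11},…,v_{mm}} ⊆ Dₙ`. -/
def C (D : DigraphSubalgebra n m) : Set (Matrix (Fin n) (Fin n) ℂ) :=
  (Submodule.span ℂ (Set.range fun k => D.u k k) : Submodule ℂ _)

/-- The normaliser `N_{C'}(A')`: partial isometries `w ∈ A'` with
`w c w* ∈ C'` and `w* c w ∈ C'` for all `c ∈ C'`. -/
def N (D : DigraphSubalgebra n m) : Set (Matrix (Fin n) (Fin n) ℂ) :=
  {w | w ∈ D.A ∧ (wᴴ * w) * (wᴴ * w) = wᴴ * w ∧
    ∀ c ∈ D.C, w * c * wᴴ ∈ D.C ∧ wᴴ * c * w ∈ D.C}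

end DigraphSubalgebra

namespace DigraphSubalgebra

variable {n m : ℕ}


/- ## entry-level helpers -/

lemma mul_apply_diag_left {A B : Matrix (Fin n) (Fin n) ℂ} (hA : A.IsDiag) (i j : Fin n) :
    (A * B) i j = A i i * B i j := by
  rw [Matrix.mul_apply]
  exact Finset.sum_eq_single i (fun a _ ha => by rw [hA (Ne.symm ha), zero_mul])
    (fun h => absurd (Finset.mem_univ i) h)

lemma mul_apply_diag_right {A B : Matrix (Fin n) (Fin n) ℂ} (hB : B.IsDiag) (i j : Fin n) :
    (A * B) i j = A i j * B j j := by
  rw [Matrix.mul_apply]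
  exact Finset.sum_eq_single j (fun a _ ha => by rw [hB ha, mul_zero])
    (fun h => absurd (Finset.mem_univ j) h)

variable (D : DigraphSubalgebra n m)

lemma diag_entry_01 (k : Fin m) (i : Fin n) : D.u k k i i = 0 ∨ D.u k k i i = 1 := by
  have h := congrFun (congrFun (D.diag_proj k).1 i) i
  rw [mul_apply_diag_left (D.diag_isDiag k)] at h
  have hx : D.u k k i i * (D.u k k i i - 1) = 0 := by
    have : (D.u k k * D.u k k) i i = D.u k k i i * D.u k k i i :=
      mul_apply_diag_left (D.diag_isDiag k) i i
    linear_combination h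
  rcases _root_.mul_eq_zero.mp hx with h0 | h1
  · exact Or.inl h0
  · exact Or.inr (by linear_combination h1)

lemma diag_entry_eq_of_ne_zero {k k' : Fin m} {i : Fin n}
    (h1 : D.u k k i i ≠ 0) (h2 : D.u k' k' i i ≠ 0) : k = k' := by
  by_contra hne
  have h0 := congrFun (congrFun (D.diag_ortho k k' hne) i) i
  rw [mul_apply_diag_left (D.diag_isDiag k)] at h0
  simp only [Matrix.zero_apply] at h0
  rcases _root_.mul_eq_zero.mp h0 with h | h
  · exact h1 h
  · exact h2 h

lemma row_supp {k l : Fin m} (hS : D.S k l) {i j : Fin n} (h : D.u k l i j ≠ 0) :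
    D.u k k i i ≠ 0 := by
  have he := congrFun (congrFun (D.conj_right k l hS) i) i
  rw [Matrix.mul_apply] at he
  intro h0
  rw [h0] at he
  have : ∀ a ∈ Finset.univ, (0:ℝ) ≤ Complex.normSq (D.u k l i a) :=
    fun a _ => Complex.normSq_nonneg _
  have hsum : ∑ a, (D.u k l i a * (D.u k l)ᴴ a i) = ∑ a, (Complex.normSq (D.u k l i a) : ℂ) := by
    refine Finset.sum_congr rfl (fun a _ => ?_)
    rw [Matrix.conjTranspose_apply]
    exact Complex.mul_conj _
  rw [hsum] at he
  rw [← Complex.ofReal_sum] at he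
  have := (Finset.sum_eq_zero_iff_of_nonneg this).mp (by exact_mod_cast he) j (Finset.mem_univ j)
  exact h (Complex.normSq_eq_zero.mp this)

lemma col_supp {k l : Fin m} (hS : D.S k l) {i j : Fin n} (h : D.u k l i j ≠ 0) :
    D.u l l j j ≠ 0 := by
  have he := congrFun (congrFun (D.conj_left k l hS) j) j
  rw [Matrix.mul_apply] at he
  intro h0
  rw [h0] at he
  have hnn : ∀ a ∈ Finset.univ, (0:ℝ) ≤ Complex.normSq (D.u k l a j) :=
    fun a _ => Complex.normSq_nonneg _
  have hsum : ∑ a, ((D.u k l)ᴴ j a * D.u k l a j) = ∑ a, (Complex.normSq (D.u k l a j) : ℂ) := by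
    refine Finset.sum_congr rfl (fun a _ => ?_)
    rw [Matrix.conjTranspose_apply, mul_comm]
    exact Complex.mul_conj _
  rw [hsum, ← Complex.ofReal_sum] at he
  have := (Finset.sum_eq_zero_iff_of_nonneg hnn).mp (by exact_mod_cast he) i (Finset.mem_univ i)
  exact h (Complex.normSq_eq_zero.mp this)

lemma row_surj {k l : Fin m} (hS : D.S k l) {i : Fin n} (h : D.u k k i i ≠ 0) :
    ∃ j, D.u k l i j ≠ 0 := by
  by_contra hno
  push_neg at hno
  have he := congrFun (congrFun (D.conj_right k l hS) i) i
  rw [Matrix.mul_apply] at he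
  apply h
  rw [← he]
  exact Finset.sum_eq_zero (fun a _ => by rw [hno a, zero_mul])

lemma col_surj {k l : Fin m} (hS : D.S k l) {j : Fin n} (h : D.u l l j j ≠ 0) :
    ∃ i, D.u k l i j ≠ 0 := by
  by_contra hno
  push_neg at hno
  have he := congrFun (congrFun (D.conj_left k l hS) j) j
  rw [Matrix.mul_apply] at he
  apply h
  rw [← he]
  exact Finset.sum_eq_zero (fun a _ => by rw [hno a, mul_zero])

lemma entry_unique {k l k' l' : Fin m} (hS : D.S k l) (hS' : D.S k' l') {i j : Fin n}
    (h : D.u k l i j ≠ 0) (h' : D.u k' l' i j ≠ 0) : k = k' ∧ l = l' :=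
  ⟨D.diag_entry_eq_of_ne_zero (D.row_supp hS h) (D.row_supp hS' h'),
   D.diag_entry_eq_of_ne_zero (D.col_supp hS h) (D.col_supp hS' h')⟩

/- ## row/column uniqueness and unimodularity of unit entries -/

lemma stdBasis_isDiag (i : Fin n) : (Matrix.single i i (1:ℂ)).IsDiag := by
  intro a b hab
  rw [Matrix.single_apply_of_ne]
  rintro ⟨rfl, rfl⟩
  exact hab rfl

lemma row_unique {k l : Fin m} (hS : D.S k l) {i j j' : Fin n}
    (h : D.u k l i j ≠ 0) (h' : D.u k l i j' ≠ 0) : j = j' := by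
  by_contra hne
  have hd := D.normalises_right k l hS (Matrix.single i i 1) (stdBasis_isDiag i)
  have h0 := hd hne
  beta_reduce at h0
  have hmid : ((D.u k l)ᴴ * Matrix.single i i 1 * D.u k l :
      Matrix (Fin n) (Fin n) ℂ) j j' = star (D.u k l i j) * D.u k l i j' := by
    rw [Matrix.mul_apply]
    have hinner : ∀ b, ((D.u k l)ᴴ * Matrix.single i i 1 :
        Matrix (Fin n) (Fin n) ℂ) j b = if b = i then star (D.u k l i j) else 0 := by
      intro b
      rw [Matrix.mul_apply]
      rw [Finset.sum_eq_single i (fun a _ ha => ?_) (fun hni => absurd (Finset.mem_univ i) hni)]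
      · by_cases hbi : b = i
        · subst hbi
          rw [if_pos rfl, Matrix.single_apply_same, mul_one, Matrix.conjTranspose_apply]
        · rw [if_neg hbi, Matrix.single_apply_of_ne, mul_zero]
          rintro ⟨-, rfl⟩
          exact hbi rfl
      · rw [Matrix.single_apply_of_ne, mul_zero]
        rintro ⟨rfl, -⟩
        exact ha rfl
    rw [Finset.sum_congr rfl (fun b _ => by rw [hinner b])]
    rw [Finset.sum_eq_single i (fun b _ hb => by rw [if_neg hb, zero_mul])
      (fun hni => absurd (Finset.mem_univ i) hni), if_pos rfl]
  rw [hmid] at h0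
  rcases _root_.mul_eq_zero.mp h0 with hc | hc
  · exact h (by simpa using hc)
  · exact h' hc

lemma col_unique {k l : Fin m} (hS : D.S k l) {i i' j : Fin n}
    (h : D.u k l i j ≠ 0) (h' : D.u k l i' j ≠ 0) : i = i' := by
  by_contra hne
  have hd := D.normalises_left k l hS (Matrix.single j j 1) (stdBasis_isDiag j)
  have h0 := hd hne
  beta_reduce at h0
  have hmid : (D.u k l * Matrix.single j j 1 * (D.u k l)ᴴ :
      Matrix (Fin n) (Fin n) ℂ) i i' = D.u k l i j * star (D.u k l i' j) := by
    rw [Matrix.mul_apply]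
    have hinner : ∀ b, (D.u k l * Matrix.single j j 1 :
        Matrix (Fin n) (Fin n) ℂ) i b = if b = j then D.u k l i j else 0 := by
      intro b
      rw [Matrix.mul_apply]
      rw [Finset.sum_eq_single j (fun a _ ha => ?_) (fun hnj => absurd (Finset.mem_univ j) hnj)]
      · by_cases hbj : b = j
        · subst hbj
          rw [if_pos rfl, Matrix.single_apply_same, mul_one]
        · rw [if_neg hbj, Matrix.single_apply_of_ne, mul_zero]
          rintro ⟨-, rfl⟩
          exact hbj rfl
      · rw [Matrix.single_apply_of_ne, mul_zero]
        rintro ⟨rfl, -⟩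
        exact ha rfl
    rw [Finset.sum_congr rfl (fun b _ => by rw [hinner b])]
    rw [Finset.sum_eq_single j (fun b _ hb => by rw [if_neg hb, zero_mul])
      (fun hnj => absurd (Finset.mem_univ j) hnj), if_pos rfl, Matrix.conjTranspose_apply]
  rw [hmid] at h0
  rcases _root_.mul_eq_zero.mp h0 with hc | hc
  · exact h hc
  · exact h' (by simpa using hc)

lemma unimod {k l : Fin m} (hS : D.S k l) {i j : Fin n} (h : D.u k l i j ≠ 0) :
    ‖D.u k l i j‖ = 1 := by
  have he := congrFun (congrFun (D.conj_left k l hS) j) j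
  rw [Matrix.mul_apply] at he
  have hcoll : ∑ a, ((D.u k l)ᴴ j a * D.u k l a j) = star (D.u k l i j) * D.u k l i j := by
    rw [Finset.sum_eq_single i (fun a _ ha => ?_) (fun hni => absurd (Finset.mem_univ i) hni)]
    · rw [Matrix.conjTranspose_apply]
    · rw [Matrix.conjTranspose_apply]
      by_cases haz : D.u k l a j = 0
      · rw [haz, mul_zero]
      · exact absurd (D.col_unique hS haz h) ha
  rw [hcoll] at he
  have h1 : D.u l l j j = 1 := by
    rcases D.diag_entry_01 l j with h0 | h1
    · exact absurd h0 (D.col_supp hS h)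
    · exact h1
  rw [h1] at he
  have : (Complex.normSq (D.u k l i j) : ℂ) = 1 := by
    rw [← he, mul_comm]
    exact (Complex.mul_conj _).symm
  have hr : Complex.normSq (D.u k l i j) = 1 := by exact_mod_cast this
  have hsq : ‖D.u k l i j‖ ^ 2 = 1 := by
    rw [Complex.sq_norm]
    exact hr
  nlinarith [norm_nonneg (D.u k l i j)]

/- ## algebraic product helpers -/

lemma diag_mul_unit {k l : Fin m} (hS : D.S k l) (j : Fin m) :
    D.u j j * D.u k l = if j = k then D.u k l else 0 := by
  by_cases hjk : j = k
  · subst hjk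
    rw [if_pos rfl]
    exact D.mul_eq j j l (D.refl j) hS
  · rw [if_neg hjk]
    exact D.mul_eq_zero j j k l (D.refl j) hS hjk

lemma unit_mul_diag {k l : Fin m} (hS : D.S k l) (j : Fin m) :
    D.u k l * D.u j j = if l = j then D.u k l else 0 := by
  by_cases hlj : l = j
  · subst hlj
    rw [if_pos rfl]
    exact D.mul_eq k l l hS (D.refl l)
  · rw [if_neg hlj]
    exact D.mul_eq_zero k l j j hS (D.refl j) hlj

lemma conjT_mul_ne {k l k' l' : Fin m} (hS : D.S k l) (hS' : D.S k' l') (hkk : k ≠ k') :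
    (D.u k l)ᴴ * D.u k' l' = 0 := by
  have h1 : D.u k l = D.u k k * D.u k l := by rw [diag_mul_unit D hS k, if_pos rfl]
  have h2 : D.u k' l' = D.u k' k' * D.u k' l' := by rw [diag_mul_unit D hS' k', if_pos rfl]
  calc (D.u k l)ᴴ * D.u k' l' = ((D.u k k * D.u k l)ᴴ) * (D.u k' k' * D.u k' l') := by
        rw [← h1, ← h2]
    _ = (D.u k l)ᴴ * ((D.u k k * D.u k' k') * D.u k' l') := by
        rw [Matrix.conjTranspose_mul, (D.diag_proj k).2]
        noncomm_ring
    _ = 0 := by rw [D.diag_ortho k k' hkk, zero_mul, mul_zero]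

lemma mul_conjT_ne {k l k' l' : Fin m} (hS : D.S k l) (hS' : D.S k' l') (hll : l ≠ l') :
    D.u k l * (D.u k' l')ᴴ = 0 := by
  have h1 : D.u k l = D.u k l * D.u l l := by rw [unit_mul_diag D hS l, if_pos rfl]
  have h2 : D.u k' l' = D.u k' l' * D.u l' l' := by rw [unit_mul_diag D hS' l', if_pos rfl]
  calc D.u k l * (D.u k' l')ᴴ = (D.u k l * D.u l l) * ((D.u k' l' * D.u l' l')ᴴ) := by
        rw [← h1, ← h2]
    _ = D.u k l * ((D.u l l * D.u l' l')) * (D.u k' l')ᴴ := by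
        rw [Matrix.conjTranspose_mul, (D.diag_proj l').2]
        noncomm_ring
    _ = 0 := by rw [D.diag_ortho l l' hll, mul_zero, zero_mul]

lemma conjT_mul_same_ne_zero {k l l' : Fin m} (hS : D.S k l) (hS' : D.S k l')
    (h : D.u k l ≠ 0) : (D.u k l)ᴴ * D.u k l' ≠ 0 := by
  intro h0
  have : D.u k k = 0 := by
    rw [← (D.diag_proj k).1]
    calc D.u k k * D.u k k = (D.u k l * (D.u k l)ᴴ) * (D.u k l' * (D.u k l')ᴴ) := by
          rw [D.conj_right k l hS, D.conj_right k l' hS']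
      _ = D.u k l * ((D.u k l)ᴴ * D.u k l') * (D.u k l')ᴴ := by noncomm_ring
      _ = 0 := by rw [h0, mul_zero, zero_mul]
  apply h
  rw [← (if_pos rfl : (if k = k then D.u k l else 0) = D.u k l), ← diag_mul_unit D hS k, this,
    Matrix.zero_mul]

lemma mul_conjT_same_ne_zero {k k' l : Fin m} (hS : D.S k l) (hS' : D.S k' l)
    (h : D.u k l ≠ 0) : D.u k l * (D.u k' l)ᴴ ≠ 0 := by
  intro h0
  have hll : D.u l l = 0 := by
    rw [← (D.diag_proj l).1]
    calc D.u l l * D.u l l = ((D.u k l)ᴴ * D.u k l) * ((D.u k' l)ᴴ * D.u k' l) := by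
          rw [D.conj_left k l hS, D.conj_left k' l hS']
      _ = (D.u k l)ᴴ * (D.u k l * (D.u k' l)ᴴ) * D.u k' l := by noncomm_ring
      _ = 0 := by rw [h0, mul_zero, zero_mul]
  apply h
  rw [← (if_pos rfl : (if l = l then D.u k l else 0) = D.u k l), ← unit_mul_diag D hS l, hll,
    Matrix.mul_zero]

lemma mem_C_isDiag {x : Matrix (Fin n) (Fin n) ℂ} (hx : x ∈ D.C) : x.IsDiag := by
  refine Submodule.span_induction ?_ ?_ ?_ ?_ hx
  · rintro y ⟨k, rfl⟩
    exact D.diag_isDiag k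
  · exact Matrix.isDiag_zero
  · intro a b _ _ ha hb
    exact ha.add hb
  · intro c a _ ha
    exact ha.smul c

lemma diag_mem_C (k : Fin m) : D.u k k ∈ D.C :=
  Submodule.subset_span ⟨k, rfl⟩

/-- canonical finite representation of elements of `D.A` -/
lemma repr {x : Matrix (Fin n) (Fin n) ℂ} (hx : x ∈ D.A) :
    ∃ c : Fin m × Fin m → ℂ,
      (∀ p, c p ≠ 0 → D.S p.1 p.2 ∧ D.u p.1 p.2 ≠ 0) ∧
      x = ∑ p : Fin m × Fin m, c p • D.u p.1 p.2 := by
  classical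
  set f : Fin m × Fin m → Matrix (Fin n) (Fin n) ℂ :=
    fun p => if D.S p.1 p.2 then D.u p.1 p.2 else 0 with hf
  have hsub : {x : Matrix (Fin n) (Fin n) ℂ | ∃ k l, D.S k l ∧ x = D.u k l} ⊆ Set.range f := by
    rintro y ⟨k, l, hS, rfl⟩
    exact ⟨(k, l), by simp [hf, hS]⟩
  have hx' : x ∈ Submodule.span ℂ (Set.range f) :=
    Submodule.span_mono hsub hx
  rw [Submodule.mem_span_range_iff_exists_fun] at hx'
  obtain ⟨c, hc⟩ := hx'
  refine ⟨fun p => if D.S p.1 p.2 ∧ D.u p.1 p.2 ≠ 0 then c p else 0, fun p hp => ?_, ?_⟩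
  · by_cases hcond : D.S p.1 p.2 ∧ D.u p.1 p.2 ≠ 0
    · exact hcond
    · simp [hcond] at hp
  · rw [← hc]
    refine Finset.sum_congr rfl (fun p _ => ?_)
    by_cases h1 : D.S p.1 p.2
    · by_cases h2 : D.u p.1 p.2 = 0
      · simp [hf, h1, h2]
      · simp [hf, h1, h2]
    · simp [hf, h1]

lemma entry_sum {c : Fin m × Fin m → ℂ} {x : Matrix (Fin n) (Fin n) ℂ}
    (hx : x = ∑ p : Fin m × Fin m, c p • D.u p.1 p.2) (i j : Fin n) :
    x i j = ∑ p : Fin m × Fin m, c p * D.u p.1 p.2 i j := by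
  rw [hx]
  rw [Matrix.sum_apply]
  exact Finset.sum_congr rfl (fun p _ => rfl)

/-- if the entry `(i,j)` lies in the block of the unit `u k l`, the entry of `x` there
is the corresponding coefficient times the unit entry. -/
lemma entry_eval {c : Fin m × Fin m → ℂ} {x : Matrix (Fin n) (Fin n) ℂ}
    (hc : ∀ p, c p ≠ 0 → D.S p.1 p.2 ∧ D.u p.1 p.2 ≠ 0)
    (hx : x = ∑ p : Fin m × Fin m, c p • D.u p.1 p.2) {k l : Fin m} (hS : D.S k l)
    {i j : Fin n} (h : D.u k l i j ≠ 0) :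
    x i j = c (k, l) * D.u k l i j := by
  rw [D.entry_sum hx]
  refine Finset.sum_eq_single (k, l) (fun q _ hq => ?_) (fun hni => absurd (Finset.mem_univ _) hni)
  by_cases hcq : c q = 0
  · rw [hcq, zero_mul]
  · obtain ⟨hSq, _⟩ := hc q hcq
    by_cases hz : D.u q.1 q.2 i j = 0
    · rw [hz, mul_zero]
    · obtain ⟨h1, h2⟩ := D.entry_unique hSq hS hz h
      exact absurd (Prod.ext h1 h2) hq

/-- a nonzero entry of `x` comes from some block -/
lemma entry_exists {c : Fin m × Fin m → ℂ} {x : Matrix (Fin n) (Fin n) ℂ}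
    (hx : x = ∑ p : Fin m × Fin m, c p • D.u p.1 p.2) {i j : Fin n} (h : x i j ≠ 0) :
    ∃ p : Fin m × Fin m, c p ≠ 0 ∧ D.u p.1 p.2 i j ≠ 0 := by
  by_contra hno
  push_neg at hno
  apply h
  rw [D.entry_sum hx]
  refine Finset.sum_eq_zero (fun p _ => ?_)
  by_cases hcp : c p = 0
  · rw [hcp, zero_mul]
  · rw [hno p hcp, mul_zero]

/- ## structure of normalising elements -/

lemma diag_sandwich_zero {P Q R : Matrix (Fin n) (Fin n) ℂ} (hP : P.IsDiag) (hQ : Q.IsDiag)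
    (hR : R.IsDiag) (h : P * R = 0) : P * Q * R = 0 := by
  ext i j
  rw [Matrix.zero_apply, mul_apply_diag_right hR, mul_apply_diag_left hP]
  by_cases hij : i = j
  · subst hij
    have h0 := congrFun (congrFun h i) i
    rw [mul_apply_diag_left hP, Matrix.zero_apply] at h0
    rcases _root_.mul_eq_zero.mp h0 with h1 | h1
    · rw [h1, zero_mul, zero_mul]
    · rw [h1, mul_zero]
  · rw [hQ hij, mul_zero, zero_mul]

lemma sandwich {x : Matrix (Fin n) (Fin n) ℂ} {c : Fin m × Fin m → ℂ}
    (hc : ∀ p, c p ≠ 0 → D.S p.1 p.2 ∧ D.u p.1 p.2 ≠ 0)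
    (hx : x = ∑ p : Fin m × Fin m, c p • D.u p.1 p.2) {k l : Fin m} (hS : D.S k l) :
    D.u k k * x * D.u l l = c (k, l) • D.u k l := by
  calc D.u k k * x * D.u l l
      = ∑ p : Fin m × Fin m, D.u k k * (c p • D.u p.1 p.2) * D.u l l := by
        rw [hx, Finset.mul_sum, Finset.sum_mul]
    _ = ∑ p : Fin m × Fin m, c p • (D.u k k * D.u p.1 p.2 * D.u l l) := by
        refine Finset.sum_congr rfl (fun p _ => ?_)
        rw [mul_smul_comm, smul_mul_assoc]
    _ = c (k, l) • D.u k l := by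
        rw [Finset.sum_eq_single (k, l) (fun q _ hq => ?_)
          (fun hni => absurd (Finset.mem_univ _) hni)]
        · rw [D.mul_eq k k l (D.refl k) hS, D.mul_eq k l l hS (D.refl l)]
        · by_cases hcq : c q = 0
          · rw [hcq, zero_smul]
          · obtain ⟨hSq, _⟩ := hc q hcq
            by_cases hq1 : k = q.1
            · have hq2 : q.2 ≠ l := by
                intro h2
                exact hq (Prod.ext hq1.symm h2)
              rw [diag_mul_unit D hSq k, if_pos hq1, unit_mul_diag D hSq l, if_neg hq2,
                smul_zero]
            · rw [diag_mul_unit D hSq k, if_neg hq1, Matrix.zero_mul, smul_zero]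

lemma row_excl {v : Matrix (Fin n) (Fin n) ℂ} (hv : v ∈ D.N)
    {c : Fin m × Fin m → ℂ}
    (hc : ∀ p, c p ≠ 0 → D.S p.1 p.2 ∧ D.u p.1 p.2 ≠ 0)
    (hx : v = ∑ p : Fin m × Fin m, c p • D.u p.1 p.2)
    {k l l' : Fin m} (hS : D.S k l) (hS' : D.S k l') (hll : l ≠ l')
    (hu : D.u k l ≠ 0) : c (k, l) = 0 ∨ c (k, l') = 0 := by
  have hq : (vᴴ * D.u k k * v).IsDiag :=
    D.mem_C_isDiag ((hv.2.2 (D.u k k) (D.diag_mem_C k)).2)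
  have h1 : (c (k, l) • D.u k l)ᴴ * (c (k, l') • D.u k l')
      = D.u l l * (vᴴ * D.u k k * v) * D.u l' l' := by
    rw [← D.sandwich hc hx hS, ← D.sandwich hc hx hS']
    rw [Matrix.conjTranspose_mul, Matrix.conjTranspose_mul, (D.diag_proj l).2,
      (D.diag_proj k).2]
    conv_rhs => rw [← (D.diag_proj k).1]
    noncomm_ring
  have h2 : D.u l l * (vᴴ * D.u k k * v) * D.u l' l' = 0 :=
    diag_sandwich_zero (D.diag_isDiag l) hq (D.diag_isDiag l') (D.diag_ortho l l' hll)
  rw [h2] at h1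
  rw [Matrix.conjTranspose_smul, Matrix.smul_mul, Matrix.mul_smul, smul_smul] at h1
  rcases smul_eq_zero.mp h1 with h3 | h3
  · rcases _root_.mul_eq_zero.mp h3 with h4 | h4
    · exact Or.inl (by simpa using h4)
    · exact Or.inr h4
  · exact absurd h3 (D.conjT_mul_same_ne_zero hS hS' hu)

lemma col_excl {v : Matrix (Fin n) (Fin n) ℂ} (hv : v ∈ D.N)
    {c : Fin m × Fin m → ℂ}
    (hc : ∀ p, c p ≠ 0 → D.S p.1 p.2 ∧ D.u p.1 p.2 ≠ 0)
    (hx : v = ∑ p : Fin m × Fin m, c p • D.u p.1 p.2)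
    {k k' l : Fin m} (hS : D.S k l) (hS' : D.S k' l) (hkk : k ≠ k')
    (hu : D.u k l ≠ 0) : c (k, l) = 0 ∨ c (k', l) = 0 := by
  have hq : (v * D.u l l * vᴴ).IsDiag :=
    D.mem_C_isDiag ((hv.2.2 (D.u l l) (D.diag_mem_C l)).1)
  have h1 : (c (k, l) • D.u k l) * (c (k', l) • D.u k' l)ᴴ
      = D.u k k * (v * D.u l l * vᴴ) * D.u k' k' := by
    rw [← D.sandwich hc hx hS, ← D.sandwich hc hx hS']
    rw [Matrix.conjTranspose_mul, Matrix.conjTranspose_mul, (D.diag_proj l).2,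
      (D.diag_proj k').2]
    conv_rhs => rw [← (D.diag_proj l).1]
    noncomm_ring
  have h2 : D.u k k * (v * D.u l l * vᴴ) * D.u k' k' = 0 :=
    diag_sandwich_zero (D.diag_isDiag k) hq (D.diag_isDiag k') (D.diag_ortho k k' hkk)
  rw [h2] at h1
  rw [Matrix.conjTranspose_smul, Matrix.smul_mul, Matrix.mul_smul, smul_smul] at h1
  rcases smul_eq_zero.mp h1 with h3 | h3
  · rcases _root_.mul_eq_zero.mp h3 with h4 | h4
    · exact Or.inl h4
    · exact Or.inr (by simpa using h4)
  · exact absurd h3 (D.mul_conjT_same_ne_zero hS hS' hu)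

/-- row uniqueness for normalising elements -/
lemma N_row_unique {v : Matrix (Fin n) (Fin n) ℂ} (hv : v ∈ D.N)
    {c : Fin m × Fin m → ℂ}
    (hc : ∀ p, c p ≠ 0 → D.S p.1 p.2 ∧ D.u p.1 p.2 ≠ 0)
    (hx : v = ∑ p : Fin m × Fin m, c p • D.u p.1 p.2)
    {i j j' : Fin n} (h : v i j ≠ 0) (h' : v i j' ≠ 0) : j = j' := by
  obtain ⟨p, hcp, hup⟩ := D.entry_exists hx h
  obtain ⟨p', hcp', hup'⟩ := D.entry_exists hx h'
  obtain ⟨hSp, hunz⟩ := hc p hcp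
  obtain ⟨hSp', hunz'⟩ := hc p' hcp'
  have hk : p.1 = p'.1 :=
    D.diag_entry_eq_of_ne_zero (D.row_supp hSp hup) (D.row_supp hSp' hup')
  have hl : p.2 = p'.2 := by
    by_contra hne
    have := D.row_excl hv hc hx hSp (hk ▸ hSp') hne hunz
    rcases this with h0 | h0
    · exact hcp (by rwa [Prod.mk.eta] at h0)
    · apply hcp'
      have hpe : ((p.1, p'.2) : Fin m × Fin m) = p' := by rw [hk]
      rwa [hpe] at h0
  have hpp : p = p' := Prod.ext hk hl
  subst hpp
  exact D.row_unique hSp hup hup'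

/-- column uniqueness for normalising elements -/
lemma N_col_unique {v : Matrix (Fin n) (Fin n) ℂ} (hv : v ∈ D.N)
    {c : Fin m × Fin m → ℂ}
    (hc : ∀ p, c p ≠ 0 → D.S p.1 p.2 ∧ D.u p.1 p.2 ≠ 0)
    (hx : v = ∑ p : Fin m × Fin m, c p • D.u p.1 p.2)
    {i i' j : Fin n} (h : v i j ≠ 0) (h' : v i' j ≠ 0) : i = i' := by
  obtain ⟨p, hcp, hup⟩ := D.entry_exists hx h
  obtain ⟨p', hcp', hup'⟩ := D.entry_exists hx h'
  obtain ⟨hSp, hunz⟩ := hc p hcp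
  obtain ⟨hSp', hunz'⟩ := hc p' hcp'
  have hl : p.2 = p'.2 :=
    D.diag_entry_eq_of_ne_zero (D.col_supp hSp hup) (D.col_supp hSp' hup')
  have hk : p.1 = p'.1 := by
    by_contra hne
    have := D.col_excl hv hc hx hSp (hl ▸ hSp') hne hunz
    rcases this with h0 | h0
    · exact hcp (by rwa [Prod.mk.eta] at h0)
    · apply hcp'
      have hpe : ((p'.1, p.2) : Fin m × Fin m) = p' := by rw [hl]
      rwa [hpe] at h0
  have hpp : p = p' := Prod.ext hk hl
  subst hpp
  exact D.col_unique hSp hup hup'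

/-- unimodularity of the entries of normalising elements -/
lemma N_unimod {v : Matrix (Fin n) (Fin n) ℂ} (hv : v ∈ D.N)
    {c : Fin m × Fin m → ℂ}
    (hc : ∀ p, c p ≠ 0 → D.S p.1 p.2 ∧ D.u p.1 p.2 ≠ 0)
    (hx : v = ∑ p : Fin m × Fin m, c p • D.u p.1 p.2)
    {i j : Fin n} (h : v i j ≠ 0) : ‖v i j‖ = 1 := by
  -- v = (∑ k, u k k) * v
  have hev : (∑ k : Fin m, D.u k k) * v = v := by
    rw [hx, Finset.mul_sum]
    refine Finset.sum_congr rfl (fun p _ => ?_)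
    rw [mul_smul_comm]
    by_cases hcp : c p = 0
    · rw [hcp, zero_smul, zero_smul]
    · congr 1
      obtain ⟨hSp, _⟩ := hc p hcp
      rw [Finset.sum_mul]
      rw [Finset.sum_eq_single p.1 (fun b _ hb => ?_)
        (fun hni => absurd (Finset.mem_univ _) hni)]
      · rw [diag_mul_unit D hSp p.1, if_pos rfl]
      · rw [diag_mul_unit D hSp b, if_neg hb]
  have hdiag : (vᴴ * v).IsDiag := by
    have heq : vᴴ * v = ∑ k : Fin m, vᴴ * D.u k k * v := by
      conv_lhs => rw [show vᴴ * v = vᴴ * ((∑ k : Fin m, D.u k k) * v) from by rw [hev]]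
      rw [Finset.sum_mul, Finset.mul_sum]
      exact Finset.sum_congr rfl (fun k _ => by noncomm_ring)
    rw [heq]
    have : (∑ k : Fin m, vᴴ * D.u k k * v) ∈ D.C := by
      refine Submodule.sum_mem _ (fun k _ => ?_)
      exact (hv.2.2 (D.u k k) (D.diag_mem_C k)).2
    exact D.mem_C_isDiag this
  -- the (j,j) entry of vᴴv is 0 or 1
  have hidem := hv.2.1
  have hjj := congrFun (congrFun hidem j) j
  rw [mul_apply_diag_left hdiag] at hjj
  have h01 : (vᴴ * v) j j = 0 ∨ (vᴴ * v) j j = 1 := by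
    have hx2 : (vᴴ * v) j j * ((vᴴ * v) j j - 1) = 0 := by linear_combination hjj
    rcases _root_.mul_eq_zero.mp hx2 with h0 | h0
    · exact Or.inl h0
    · exact Or.inr (by linear_combination h0)
  -- compute the entry
  have hent : (vᴴ * v) j j = star (v i j) * v i j := by
    rw [Matrix.mul_apply]
    rw [Finset.sum_eq_single i (fun a _ ha => ?_) (fun hni => absurd (Finset.mem_univ _) hni)]
    · rw [Matrix.conjTranspose_apply]
    · rw [Matrix.conjTranspose_apply]
      by_cases haz : v a j = 0
      · rw [haz, mul_zero]
      · exact absurd (D.N_col_unique hv hc hx haz h) ha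
  rcases h01 with h0 | h0
  · exfalso
    rw [hent] at h0
    rcases _root_.mul_eq_zero.mp h0 with h1 | h1
    · exact h (by simpa using h1)
    · exact h h1
  · rw [hent] at h0
    have : (Complex.normSq (v i j) : ℂ) = 1 := by
      rw [← h0, mul_comm]
      exact (Complex.mul_conj _).symm
    have hr : Complex.normSq (v i j) = 1 := by exact_mod_cast this
    have hsq : ‖v i j‖ ^ 2 = 1 := by
      rw [Complex.sq_norm]
      exact hr
    nlinarith [norm_nonneg (v i j)]

/- ## constructing elements of the normaliser -/

lemma unit_star_mul {z : ℂ} (hz : ‖z‖ = 1) : star z * z = 1 := by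
  have : star z * z = (Complex.normSq z : ℂ) := by
    rw [mul_comm]
    exact Complex.mul_conj _
  rw [this]
  have : Complex.normSq z = 1 := by
    rw [← Complex.sq_norm, hz, one_pow]
  rw [this, Complex.ofReal_one]

lemma unit_mul_star {z : ℂ} (hz : ‖z‖ = 1) : z * star z = 1 := by
  rw [mul_comm]; exact unit_star_mul hz

lemma N_mem_of (G : Finset (Fin m × Fin m)) (γ : Fin m × Fin m → ℂ)
    (hSG : ∀ p ∈ G, D.S p.1 p.2) (hγ : ∀ p ∈ G, ‖γ p‖ = 1)
    (hk : ∀ p ∈ G, ∀ q ∈ G, p.1 = q.1 → p = q)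
    (hl : ∀ p ∈ G, ∀ q ∈ G, p.2 = q.2 → p = q) :
    (∑ p ∈ G, γ p • D.u p.1 p.2) ∈ D.N := by
  classical
  set w : Matrix (Fin n) (Fin n) ℂ := ∑ p ∈ G, γ p • D.u p.1 p.2 with hw
  have hwH : wᴴ = ∑ p ∈ G, star (γ p) • (D.u p.1 p.2)ᴴ := by
    rw [hw, Matrix.conjTranspose_sum]
    exact Finset.sum_congr rfl (fun p _ => Matrix.conjTranspose_smul _ _)
  have key1 : wᴴ * w = ∑ p ∈ G, D.u p.2 p.2 := by
    rw [hwH, hw, Finset.sum_mul_sum]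
    refine Finset.sum_congr rfl (fun p hp => ?_)
    rw [Finset.sum_eq_single_of_mem p hp (fun q hq hqp => ?_)]
    · rw [smul_mul_smul_comm, unit_star_mul (hγ p hp), D.conj_left p.1 p.2 (hSG p hp),
        one_smul]
    · rw [smul_mul_smul_comm]
      have hne : p.1 ≠ q.1 := fun h => hqp (hk p hp q hq h).symm
      rw [D.conjT_mul_ne (hSG p hp) (hSG q hq) hne, smul_zero]
  have key2 : (wᴴ * w) * (wᴴ * w) = wᴴ * w := by
    rw [key1, Finset.sum_mul_sum]
    refine Finset.sum_congr rfl (fun p hp => ?_)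
    rw [Finset.sum_eq_single_of_mem p hp (fun q hq hqp => ?_)]
    · exact (D.diag_proj p.2).1
    · have hne : p.2 ≠ q.2 := fun h => hqp (hl p hp q hq h).symm
      exact D.diag_ortho p.2 q.2 hne
  have hwA : w ∈ D.A := by
    refine Submodule.sum_mem _ (fun p hp => Submodule.smul_mem _ _ ?_)
    exact Submodule.subset_span ⟨p.1, p.2, hSG p hp, rfl⟩
  refine ⟨hwA, key2, ?_⟩
  intro c hc
  refine Submodule.span_induction ?_ ?_ ?_ ?_ hc
  · rintro y ⟨j, rfl⟩
    constructor
    · -- w * u j j * wᴴ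
      have hcomp : w * D.u j j * wᴴ = ∑ p ∈ G, (if p.2 = j then D.u p.1 p.1 else 0) := by
        have h1 : w * D.u j j = ∑ p ∈ G, γ p • (D.u p.1 p.2 * D.u j j) := by
          rw [hw, Finset.sum_mul]
          exact Finset.sum_congr rfl (fun p _ => smul_mul_assoc _ _ _)
        rw [h1, hwH, Finset.sum_mul_sum]
        refine Finset.sum_congr rfl (fun p hp => ?_)
        rw [Finset.sum_eq_single_of_mem p hp (fun q hq hqp => ?_)]
        · rw [smul_mul_smul_comm]
          rw [unit_mul_diag D (hSG p hp) j]
          by_cases hpj : p.2 = j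
          · rw [if_pos hpj, if_pos hpj, D.conj_right p.1 p.2 (hSG p hp),
              unit_mul_star (hγ p hp), one_smul]
          · rw [if_neg hpj, if_neg hpj, Matrix.zero_mul, smul_zero]
        · rw [smul_mul_smul_comm, unit_mul_diag D (hSG p hp) j]
          by_cases hpj : p.2 = j
          · rw [if_pos hpj]
            have hne : p.2 ≠ q.2 := fun h => hqp (hl p hp q hq h).symm
            rw [D.mul_conjT_ne (hSG p hp) (hSG q hq) hne, smul_zero]
          · rw [if_neg hpj, Matrix.zero_mul, smul_zero]
      rw [hcomp]
      refine Submodule.sum_mem _ (fun p _ => ?_)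
      by_cases hpj : p.2 = j
      · rw [if_pos hpj]
        exact D.diag_mem_C p.1
      · rw [if_neg hpj]
        exact Submodule.zero_mem _
    · -- wᴴ * u j j * w
      have hcomp : wᴴ * D.u j j * w = ∑ p ∈ G, (if j = p.1 then D.u p.2 p.2 else 0) := by
        have h1 : wᴴ * D.u j j = ∑ p ∈ G, star (γ p) • ((D.u p.1 p.2)ᴴ * D.u j j) := by
          rw [hwH, Finset.sum_mul]
          exact Finset.sum_congr rfl (fun p _ => smul_mul_assoc _ _ _)
        have h2 : ∀ p ∈ G, (D.u p.1 p.2)ᴴ * D.u j j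
            = if j = p.1 then (D.u p.1 p.2)ᴴ else 0 := by
          intro p hp
          have : (D.u p.1 p.2)ᴴ * D.u j j = (D.u j j * D.u p.1 p.2)ᴴ := by
            rw [Matrix.conjTranspose_mul, (D.diag_proj j).2]
          rw [this, diag_mul_unit D (hSG p hp) j]
          by_cases hjp : j = p.1
          · rw [if_pos hjp, if_pos hjp]
          · rw [if_neg hjp, if_neg hjp, Matrix.conjTranspose_zero]
        rw [h1, hw, Finset.sum_mul_sum]
        refine Finset.sum_congr rfl (fun p hp => ?_)
        rw [Finset.sum_eq_single_of_mem p hp (fun q hq hqp => ?_)]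
        · rw [smul_mul_smul_comm, h2 p hp]
          by_cases hjp : j = p.1
          · rw [if_pos hjp, if_pos hjp, D.conj_left p.1 p.2 (hSG p hp),
              unit_star_mul (hγ p hp), one_smul]
          · rw [if_neg hjp, if_neg hjp, Matrix.zero_mul, smul_zero]
        · rw [smul_mul_smul_comm, h2 p hp]
          by_cases hjp : j = p.1
          · rw [if_pos hjp]
            have hne : p.1 ≠ q.1 := fun h => hqp (hk p hp q hq h).symm
            rw [D.conjT_mul_ne (hSG p hp) (hSG q hq) hne, smul_zero]
          · rw [if_neg hjp, Matrix.zero_mul, smul_zero]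
      rw [hcomp]
      refine Submodule.sum_mem _ (fun p _ => ?_)
      by_cases hpj : j = p.1
      · rw [if_pos hpj]
        exact D.diag_mem_C p.2
      · rw [if_neg hpj]
        exact Submodule.zero_mem _
  · constructor
    · rw [Matrix.mul_zero, Matrix.zero_mul]
      exact Submodule.zero_mem _
    · rw [Matrix.mul_zero, Matrix.zero_mul]
      exact Submodule.zero_mem _
  · intro a b _ _ ha hb
    constructor
    · rw [Matrix.mul_add, Matrix.add_mul]
      exact Submodule.add_mem _ ha.1 hb.1
    · rw [Matrix.mul_add, Matrix.add_mul]
      exact Submodule.add_mem _ ha.2 hb.2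
  · intro r a _ ha
    constructor
    · rw [Matrix.mul_smul, Matrix.smul_mul]
      exact Submodule.smul_mem _ _ ha.1
    · rw [Matrix.mul_smul, Matrix.smul_mul]
      exact Submodule.smul_mem _ _ ha.2

end DigraphSubalgebra

section NormLemmas
variable {n : ℕ}


lemma sum_sq_of_unique (f : Fin n → ℂ)
    (h : ∀ j j', f j ≠ 0 → f j' ≠ 0 → j = j') :
    ‖∑ j, f j‖ ^ 2 = ∑ j, ‖f j‖ ^ 2 := by
  by_cases hz : ∀ j, f j = 0
  · simp [hz]
  · push_neg at hz
    obtain ⟨j₀, hj₀⟩ := hz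
    have h1 : ∑ j, f j = f j₀ := by
      refine Finset.sum_eq_single j₀ (fun b _ hb => ?_) (by simp)
      by_contra hfb
      exact hb (h b j₀ hfb hj₀)
    have h2 : ∑ j, ‖f j‖ ^ 2 = ‖f j₀‖ ^ 2 := by
      refine Finset.sum_eq_single j₀ (fun b _ hb => ?_) (by simp)
      by_contra hfb
      have : f b ≠ 0 := by
        intro h0; rw [h0] at hfb; simp at hfb
      exact hb (h b j₀ this hj₀)
    rw [h1, h2]

lemma sum_sq_le_of_unique (f : Fin n → ℂ) (C : ℝ) (hC : 0 ≤ C)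
    (h : ∀ j j', f j ≠ 0 → f j' ≠ 0 → j = j') (hb : ∀ j, ‖f j‖ ≤ C) :
    ∑ j, ‖f j‖ ^ 2 ≤ C ^ 2 := by
  rw [← sum_sq_of_unique f h]
  have := norm_nonneg (∑ j, f j)
  have hle : ‖∑ j, f j‖ ≤ C := by
    by_cases hz : ∀ j, f j = 0
    · simp [hz]; exact hC
    · push_neg at hz
      obtain ⟨j₀, hj₀⟩ := hz
      have h1 : ∑ j, f j = f j₀ := by
        refine Finset.sum_eq_single j₀ (fun b _ hb' => ?_) (by simp)
        by_contra hfb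
        exact hb' (h b j₀ hfb hj₀)
      rw [h1]; exact hb j₀
  nlinarith

lemma opNorm_le_of_partialperm (M : Matrix (Fin n) (Fin n) ℂ) (C : ℝ) (hC : 0 ≤ C)
    (hent : ∀ i j, ‖M i j‖ ≤ C)
    (hrow : ∀ i j j', M i j ≠ 0 → M i j' ≠ 0 → j = j')
    (hcol : ∀ i i' j, M i j ≠ 0 → M i' j ≠ 0 → i = i') :
    ‖M‖ ≤ C := by
  rw [Matrix.l2_opNorm_def]
  refine ContinuousLinearMap.opNorm_le_bound _ hC (fun x => ?_)
  show ‖(Matrix.toEuclideanLin M) x‖ ≤ C * ‖x‖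
  have hx : ∀ y : EuclideanSpace ℂ (Fin n), ‖y‖ = Real.sqrt (∑ i, ‖y i‖ ^ 2) :=
    fun y => EuclideanSpace.norm_eq y
  have key : ‖(Matrix.toEuclideanLin M) x‖ ^ 2 ≤ C ^ 2 * ‖x‖ ^ 2 := by
    have happ : ∀ i, ((Matrix.toEuclideanLin M) x : EuclideanSpace ℂ (Fin n)) i
        = ∑ j, M i j * x j := fun i => rfl
    have hn : ‖(Matrix.toEuclideanLin M) x‖ ^ 2 = ∑ i, ‖∑ j, M i j * x j‖ ^ 2 := by
      rw [hx]
      rw [Real.sq_sqrt (Finset.sum_nonneg (fun i _ => sq_nonneg _))]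
      exact Finset.sum_congr rfl (fun i _ => by rw [happ i])
    rw [hn]
    have step1 : ∀ i, ‖∑ j, M i j * x j‖ ^ 2 = ∑ j, ‖M i j * x j‖ ^ 2 := by
      intro i
      refine sum_sq_of_unique _ (fun j j' hj hj' => ?_)
      exact hrow i j j' (fun h0 => hj (by simp [h0])) (fun h0 => hj' (by simp [h0]))
    calc ∑ i, ‖∑ j, M i j * x j‖ ^ 2 = ∑ i, ∑ j, ‖M i j * x j‖ ^ 2 := by
          exact Finset.sum_congr rfl (fun i _ => step1 i)
      _ = ∑ j, ∑ i, ‖M i j * x j‖ ^ 2 := Finset.sum_comm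
      _ ≤ ∑ j, C ^ 2 * ‖x j‖ ^ 2 := by
          refine Finset.sum_le_sum (fun j _ => ?_)
          have heq : ∑ i, ‖M i j * x j‖ ^ 2 = (∑ i, ‖M i j‖ ^ 2) * ‖x j‖ ^ 2 := by
            rw [Finset.sum_mul]
            exact Finset.sum_congr rfl (fun i _ => by rw [norm_mul, mul_pow])
          rw [heq]
          have hcs : ∑ i, ‖M i j‖ ^ 2 ≤ C ^ 2 :=
            sum_sq_le_of_unique (fun i => M i j) C hC
              (fun i i' hi hi' => hcol i i' j hi hi') (fun i => hent i j)
          exact mul_le_mul_of_nonneg_right hcs (sq_nonneg _)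
      _ = C ^ 2 * ‖x‖ ^ 2 := by
          rw [← Finset.mul_sum, hx x, Real.sq_sqrt (Finset.sum_nonneg (fun i _ => sq_nonneg _))]
  have h0 : (0:ℝ) ≤ ‖(Matrix.toEuclideanLin M) x‖ := norm_nonneg _
  have h1 : ‖(Matrix.toEuclideanLin M) x‖ ^ 2 ≤ (C * ‖x‖) ^ 2 := by
    rw [mul_pow]; exact key
  have := Real.sqrt_le_sqrt h1
  rwa [Real.sqrt_sq h0, Real.sqrt_sq (mul_nonneg hC (norm_nonneg x))] at this




lemma entry_norm_le (M : Matrix (Fin n) (Fin n) ℂ) (i j : Fin n) : ‖M i j‖ ≤ ‖M‖ := by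
  have h := Matrix.l2_opNorm_mulVec M (EuclideanSpace.single j 1)
  have hnx : ‖EuclideanSpace.single j (1:ℂ)‖ = 1 := by
    simp [EuclideanSpace.norm_single]
  rw [hnx, mul_one] at h
  refine le_trans ?_ h
  have hcoord : ((EuclideanSpace.equiv (Fin n) ℂ).symm (M *ᵥ (EuclideanSpace.single j 1))) i
      = M i j := by
    show (M *ᵥ (EuclideanSpace.single j 1)) i = M i j
    simp [Matrix.mulVec, dotProduct, EuclideanSpace.single_apply]
  calc ‖M i j‖
      = ‖((EuclideanSpace.equiv (Fin n) ℂ).symm (M *ᵥ (EuclideanSpace.single j 1))) i‖ := by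
        rw [hcoord]
    _ ≤ _ := by
        rw [EuclideanSpace.norm_eq]
        refine Real.le_sqrt_of_sq_le ?_
        exact Finset.single_le_sum (f := fun a => ‖((EuclideanSpace.equiv (Fin n) ℂ).symm
          (M *ᵥ (EuclideanSpace.single j 1))) a‖ ^ 2) (fun a _ => sq_nonneg _) (Finset.mem_univ i)

end NormLemmas


/-- Given `δ > 0` there exists `ε > 0` such that: for every
`n` and all digraph subalgebras `(A₁, C₁)`, `(A₂, C₂)` of `(Mₙ(ℂ), Dₙ)`, if
`A₁ ⊆_ε A₂` then `N_{C₁}(A₁) ⊆_δ N_{C₂}(A₂)`. -/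
theorem stmt_13 (δ : ℝ) (hδ : 0 < δ) :
    ∃ ε : ℝ, 0 < ε ∧
      ∀ (n m₁ m₂ : ℕ), 1 ≤ m₁ → 1 ≤ m₂ →
        ∀ (D₁ : DigraphSubalgebra n m₁) (D₂ : DigraphSubalgebra n m₂),
          (∀ a ∈ D₁.A, ‖a‖ ≤ 1 → ∃ b ∈ D₂.A, ‖a - b‖ < ε) →
          ∀ v ∈ D₁.N, ∃ w ∈ D₂.N, ‖v - w‖ < δ := by
  classical
  have hεpos : 0 < min δ 1 / 4 := by positivity
  refine ⟨min δ 1 / 4, hεpos, ?_⟩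
  intro n m₁ m₂ _ _ D₁ D₂ hAB v hv
  set ε : ℝ := min δ 1 / 4 with hεdef
  have hε1 : ε ≤ 1 / 4 := by
    rw [hεdef]
    have := min_le_right δ 1
    linarith
  have hεδ : ε ≤ δ / 4 := by
    rw [hεdef]
    have := min_le_left δ 1
    linarith
  -- structure of v
  obtain ⟨c, hc, hxc⟩ := D₁.repr hv.1
  have hvrow : ∀ i j j', v i j ≠ 0 → v i j' ≠ 0 → j = j' :=
    fun i j j' h h' => D₁.N_row_unique hv hc hxc h h'
  have hvcol : ∀ i i' j, v i j ≠ 0 → v i' j ≠ 0 → i = i' :=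
    fun i i' j h h' => D₁.N_col_unique hv hc hxc h h'
  have hvuni : ∀ i j, v i j ≠ 0 → ‖v i j‖ = 1 :=
    fun i j h => D₁.N_unimod hv hc hxc h
  have hnv : ‖v‖ ≤ 1 := by
    refine opNorm_le_of_partialperm v 1 zero_le_one (fun i j => ?_) hvrow hvcol
    by_cases h : v i j = 0
    · rw [h, norm_zero]; exact zero_le_one
    · rw [hvuni i j h]
  -- the approximant b in A₂
  obtain ⟨b, hbA, hvb⟩ := hAB v hv.1 hnv
  obtain ⟨d, hd, hbd⟩ := D₂.repr hbA
  have hentry : ∀ i j, ‖v i j - b i j‖ < ε := by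
    intro i j
    refine lt_of_le_of_lt ?_ hvb
    have := entry_norm_le (v - b) i j
    rwa [Matrix.sub_apply] at this
  -- the selected blocks
  set G : Finset (Fin m₂ × Fin m₂) :=
    Finset.univ.filter
      (fun p => D₂.S p.1 p.2 ∧ ∃ i j, v i j ≠ 0 ∧ D₂.u p.1 p.2 i j ≠ 0) with hG
  have hGmem : ∀ p, p ∈ G ↔
      D₂.S p.1 p.2 ∧ ∃ i j, v i j ≠ 0 ∧ D₂.u p.1 p.2 i j ≠ 0 := by
    intro p
    rw [hG, Finset.mem_filter]
    simp
  have hGS : ∀ p ∈ G, D₂.S p.1 p.2 := fun p hp => ((hGmem p).mp hp).1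
  -- on a selected block, the coefficient d p has norm within ε of 1
  have hGd : ∀ p ∈ G, 1 - ε < ‖d p‖ ∧ ‖d p‖ < 1 + ε := by
    intro p hp
    obtain ⟨hS, i, j, hvij, huij⟩ := (hGmem p).mp hp
    have hb : b i j = d p * D₂.u p.1 p.2 i j := D₂.entry_eval hd hbd hS huij
    have hu1 : ‖D₂.u p.1 p.2 i j‖ = 1 := D₂.unimod hS huij
    have hbn : ‖b i j‖ = ‖d p‖ := by rw [hb, norm_mul, hu1, mul_one]
    have hv1 : ‖v i j‖ = 1 := hvuni i j hvij
    have h1 := hentry i j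
    have h2 : ‖v i j‖ - ‖b i j‖ ≤ ‖v i j - b i j‖ := norm_sub_norm_le _ _
    have h3 : ‖b i j‖ - ‖v i j‖ ≤ ‖v i j - b i j‖ := by
      rw [norm_sub_rev] at h1 ⊢
      exact norm_sub_norm_le _ _
    constructor <;> [skip; skip] <;> rw [← hbn] <;> linarith
  have hGdne : ∀ p ∈ G, d p ≠ 0 := by
    intro p hp h0
    have := (hGd p hp).1
    rw [h0, norm_zero] at this
    linarith
  -- selected blocks lie inside the support of v
  have hblock : ∀ p ∈ G, ∀ i j, D₂.u p.1 p.2 i j ≠ 0 → v i j ≠ 0 := by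
    intro p hp i j huij hvij
    have hS := hGS p hp
    have hb : b i j = d p * D₂.u p.1 p.2 i j := D₂.entry_eval hd hbd hS huij
    have hu1 : ‖D₂.u p.1 p.2 i j‖ = 1 := D₂.unimod hS huij
    have hbn : ‖b i j‖ = ‖d p‖ := by rw [hb, norm_mul, hu1, mul_one]
    have h1 := hentry i j
    rw [hvij, zero_sub, norm_neg] at h1
    have := (hGd p hp).1
    rw [← hbn] at this
    linarith
  -- the selected blocks form a partial bijection
  have hkinj : ∀ p ∈ G, ∀ q ∈ G, p.1 = q.1 → p = q := by
    intro p hp q hq hpq1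
    obtain ⟨hSp, i₀, j₀, hvp, hup⟩ := (hGmem p).mp hp
    have hSq := hGS q hq
    have hkk : D₂.u q.1 q.1 i₀ i₀ ≠ 0 := by
      rw [← hpq1]
      exact D₂.row_supp hSp hup
    obtain ⟨j', huq⟩ := D₂.row_surj hSq hkk
    have hvq : v i₀ j' ≠ 0 := hblock q hq i₀ j' huq
    have hjj : j₀ = j' := hvrow i₀ j₀ j' hvp hvq
    subst hjj
    obtain ⟨h1, h2⟩ := D₂.entry_unique hSp hSq hup huq
    exact Prod.ext h1 h2
  have hlinj : ∀ p ∈ G, ∀ q ∈ G, p.2 = q.2 → p = q := by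
    intro p hp q hq hpq2
    obtain ⟨hSp, i₀, j₀, hvp, hup⟩ := (hGmem p).mp hp
    have hSq := hGS q hq
    have hll : D₂.u q.2 q.2 j₀ j₀ ≠ 0 := by
      rw [← hpq2]
      exact D₂.col_supp hSp hup
    obtain ⟨i', huq⟩ := D₂.col_surj hSq hll
    have hvq : v i' j₀ ≠ 0 := hblock q hq i' j₀ huq
    have hii : i₀ = i' := hvcol i₀ i' j₀ hvp hvq
    subst hii
    obtain ⟨h1, h2⟩ := D₂.entry_unique hSp hSq hup huq
    exact Prod.ext h1 h2
  -- the rounded coefficients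
  set γ : Fin m₂ × Fin m₂ → ℂ := fun p => ((‖d p‖ : ℂ))⁻¹ * d p with hγdef
  have hγ1 : ∀ p ∈ G, ‖γ p‖ = 1 := by
    intro p hp
    have hdn : ‖d p‖ ≠ 0 := norm_ne_zero_iff.mpr (hGdne p hp)
    rw [hγdef]
    show ‖((‖d p‖ : ℂ))⁻¹ * d p‖ = 1
    rw [norm_mul, norm_inv, Complex.norm_real, Real.norm_eq_abs,
      abs_of_nonneg (norm_nonneg (d p)), inv_mul_cancel₀ hdn]
  set w : Matrix (Fin n) (Fin n) ℂ := ∑ p ∈ G, γ p • D₂.u p.1 p.2 with hw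
  have hwN : w ∈ D₂.N := D₂.N_mem_of G γ hGS hγ1 hkinj hlinj
  refine ⟨w, hwN, ?_⟩
  -- entries of w vanish off the support of v
  have hwentry : ∀ i j, w i j = ∑ p ∈ G, γ p * D₂.u p.1 p.2 i j := by
    intro i j
    rw [hw, Matrix.sum_apply]
    exact Finset.sum_congr rfl (fun p _ => rfl)
  have hwsupp : ∀ i j, v i j = 0 → w i j = 0 := by
    intro i j hvij
    rw [hwentry]
    refine Finset.sum_eq_zero (fun p hp => ?_)
    by_cases hu : D₂.u p.1 p.2 i j = 0
    · rw [hu, mul_zero]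
    · exact absurd (hblock p hp i j hu) (by rw [hvij]; simp)
  have hsub_ne : ∀ i j, (v - w) i j ≠ 0 → v i j ≠ 0 := by
    intro i j h hvij
    apply h
    rw [Matrix.sub_apply, hvij, hwsupp i j hvij, sub_zero]
  -- entrywise bound on v - w
  have hent : ∀ i j, ‖(v - w) i j‖ ≤ δ / 2 := by
    intro i j
    by_cases hvz : v i j = 0
    · rw [Matrix.sub_apply, hvz, hwsupp i j hvz, sub_zero, norm_zero]
      linarith
    · have hv1 : ‖v i j‖ = 1 := hvuni i j hvz
      have hbne : b i j ≠ 0 := by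
        intro h0
        have h1 := hentry i j
        rw [h0, sub_zero, hv1] at h1
        linarith
      obtain ⟨p, hdp, hup⟩ := D₂.entry_exists hbd hbne
      obtain ⟨hSp, _⟩ := hd p hdp
      have hpG : p ∈ G := (hGmem p).mpr ⟨hSp, i, j, hvz, hup⟩
      have hwij : w i j = γ p * D₂.u p.1 p.2 i j := by
        rw [hwentry]
        refine Finset.sum_eq_single_of_mem p hpG (fun q hq hqp => ?_)
        by_cases hu : D₂.u q.1 q.2 i j = 0
        · rw [hu, mul_zero]
        · obtain ⟨h1, h2⟩ := D₂.entry_unique (hGS q hq) hSp hu hup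
          exact absurd (Prod.ext h1 h2) hqp
      have hbij : b i j = d p * D₂.u p.1 p.2 i j := D₂.entry_eval hd hbd hSp hup
      have hu1 : ‖D₂.u p.1 p.2 i j‖ = 1 := D₂.unimod hSp hup
      -- ‖b i j - w i j‖ = |‖d p‖ - 1|
      have hr : (0:ℝ) < ‖d p‖ := norm_pos_iff.mpr (hGdne p hpG)
      have hbw : ‖b i j - w i j‖ = |‖d p‖ - 1| := by
        rw [hbij, hwij, hγdef, ← sub_mul, norm_mul, hu1, mul_one]
        have : d p - (‖d p‖ : ℂ)⁻¹ * d p = (1 - (‖d p‖ : ℂ)⁻¹) * d p := by ring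
        rw [this, norm_mul]
        have h2 : ‖(1 : ℂ) - (‖d p‖ : ℂ)⁻¹‖ = |1 - ‖d p‖⁻¹| := by
          rw [show (1 : ℂ) - (‖d p‖ : ℂ)⁻¹ = ((1 - ‖d p‖⁻¹ : ℝ) : ℂ) by push_cast; ring]
          exact Complex.norm_real _
        rw [h2]
        have h3 : (1 - ‖d p‖⁻¹) * ‖d p‖ = ‖d p‖ - 1 := by
          rw [sub_mul, one_mul, inv_mul_cancel₀ hr.ne']
        rw [show |1 - ‖d p‖⁻¹| * ‖d p‖ = |(1 - ‖d p‖⁻¹) * ‖d p‖| by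
          rw [abs_mul, abs_of_pos hr], h3]
      have hdb : |‖d p‖ - 1| < ε := by
        obtain ⟨hl, hr'⟩ := hGd p hpG
        rw [abs_lt]
        constructor <;> linarith
      have htri : ‖(v - w) i j‖ ≤ ‖v i j - b i j‖ + ‖b i j - w i j‖ := by
        rw [Matrix.sub_apply]
        calc ‖v i j - w i j‖ = ‖(v i j - b i j) + (b i j - w i j)‖ := by ring_nf
          _ ≤ _ := norm_add_le _ _
      have h1 := hentry i j
      rw [hbw] at htri
      linarith
  have hfin : ‖v - w‖ ≤ δ / 2 := by
    refine opNorm_le_of_partialperm (v - w) (δ / 2) (by linarith) hent ?_ ?_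
    · exact fun i j j' h h' => hvrow i j j' (hsub_ne i j h) (hsub_ne i j' h')
    · exact fun i i' j h h' => hvcol i i' j (hsub_ne i j h) (hsub_ne i' j h')
  linarith
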